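/- Let X be a C*-correspondence over A with universal covariant representation (Υ, t). Then J_X·O_X ⊆ cl span{t(x)S : x ∈ X, S ∈ O_X}. Moreover, if X is regular, then the map determined by x ⊗ S ↦ t(x)S is an isomorphism of A–O_X correspondences from X ⊗_A O_X onto O_X. -/
import Mathlib


/-!  Common framework: C*-correspondences, tensor products, representations,
Cuntz–Pimsner algebras, and the category `ECCor`, axiomatised as structures. -/

noncomputable section

universe u

/-- The closed linear span of a subset of a topological `ℂ`-module. -/
def clspan {V : Type*} [AddCommMonoid V] [Module ℂ V] [TopologicalSpace V] (s : Set V) : Set V :=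
  closure ((Submodule.span ℂ s : Submodule ℂ V) : Set V)

/-- A (nondegenerate) C*-correspondence from `A` to `B`: a right Hilbert `B`-module `X`
equipped with a left action of `A` by adjointable operators, such that `A · X` is dense. -/
structure Corr (A : Type u) (B : Type u)
    [NonUnitalCStarAlgebra A] [NonUnitalCStarAlgebra B] : Type (u + 1) where
  /-- the underlying module -/
  X : Type u
  [nacg : NormedAddCommGroup X]
  [nsp : NormedSpace ℂ X]
  [cs : CompleteSpace X]
  /-- the `B`-valued inner product `⟨·,·⟩_B` -/
  ip : X → X → B
  /-- the right action of `B` -/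
  sm : X → B → X
  /-- the left action of `A` -/
  la : A → X → X
  sm_add : ∀ (x y : X) (b : B), sm (x + y) b = sm x b + sm y b
  sm_add' : ∀ (x : X) (b c : B), sm x (b + c) = sm x b + sm x c
  sm_mul : ∀ (x : X) (b c : B), sm (sm x b) c = sm x (b * c)
  sm_smul : ∀ (z : ℂ) (x : X) (b : B), sm (z • x) b = z • sm x b
  sm_smul' : ∀ (z : ℂ) (x : X) (b : B), sm x (z • b) = z • sm x b
  sm_bound : ∀ (x : X) (b : B), ‖sm x b‖ ≤ ‖x‖ * ‖b‖
  ip_add : ∀ (x y z : X), ip x (y + z) = ip x y + ip x z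
  ip_smul : ∀ (z : ℂ) (x y : X), ip x (z • y) = z • ip x y
  ip_star : ∀ (x y : X), star (ip x y) = ip y x
  ip_sm : ∀ (x y : X) (b : B), ip x (sm y b) = ip x y * b
  ip_pos : ∀ x : X, ∃ b : B, ip x x = star b * b
  ip_norm : ∀ x : X, ‖x‖ ^ 2 = ‖ip x x‖
  ip_bound : ∀ x y : X, ‖ip x y‖ ≤ ‖x‖ * ‖y‖
  la_add : ∀ (a : A) (x y : X), la a (x + y) = la a x + la a y
  la_smul : ∀ (a : A) (z : ℂ) (x : X), la a (z • x) = z • la a x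
  la_add' : ∀ (a b : A) (x : X), la (a + b) x = la a x + la b x
  la_mul : ∀ (a b : A) (x : X), la (a * b) x = la a (la b x)
  la_smul' : ∀ (z : ℂ) (a : A) (x : X), la (z • a) x = z • la a x
  la_adj : ∀ (a : A) (x y : X), ip (la a x) y = ip x (la (star a) y)
  la_bound : ∀ (a : A) (x : X), ‖la a x‖ ≤ ‖a‖ * ‖x‖
  la_sm : ∀ (a : A) (x : X) (b : B), la a (sm x b) = sm (la a x) b
  /-- nondegeneracy: `A · X` is dense in `X` -/
  nondeg : clspan {y : X | ∃ (a : A) (x : X), y = la a x} = Set.univ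

attribute [instance] Corr.nacg Corr.nsp Corr.cs

namespace Corr

variable {A B : Type u} [NonUnitalCStarAlgebra A] [NonUnitalCStarAlgebra B]

/-- The left action, as a continuous linear operator. -/
def lmul (E : Corr A B) (a : A) : E.X →L[ℂ] E.X :=
  LinearMap.mkContinuous
    { toFun := E.la a
      map_add' := E.la_add a
      map_smul' := fun z x => E.la_smul a z x }
    ‖a‖ (E.la_bound a)

/-- The rank-one operator `θ_{x,y} : z ↦ x · ⟨y, z⟩_B`. -/
def rankOne (E : Corr A B) (x y : E.X) : E.X →L[ℂ] E.X :=
  LinearMap.mkContinuous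
    { toFun := fun z => E.sm x (E.ip y z)
      map_add' := fun u v => by
        show E.sm x (E.ip y (u + v)) = E.sm x (E.ip y u) + E.sm x (E.ip y v)
        rw [E.ip_add, E.sm_add']
      map_smul' := fun c u => by
        show E.sm x (E.ip y (c • u)) = c • E.sm x (E.ip y u)
        rw [E.ip_smul, E.sm_smul'] }
    (‖x‖ * ‖y‖)
    (fun z => by
      calc ‖E.sm x (E.ip y z)‖ ≤ ‖x‖ * ‖E.ip y z‖ := E.sm_bound _ _
        _ ≤ ‖x‖ * (‖y‖ * ‖z‖) :=
            mul_le_mul_of_nonneg_left (E.ip_bound y z) (norm_nonneg x)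
        _ = ‖x‖ * ‖y‖ * ‖z‖ := (mul_assoc _ _ _).symm)

/-- The compact operators `K(X)`: the closed linear span of the rank-one operators. -/
def compacts (E : Corr A B) : Set (E.X →L[ℂ] E.X) :=
  clspan (Set.range fun p : E.X × E.X => E.rankOne p.1 p.2)

/-- A correspondence is injective if its left action is injective. -/
def Injective (E : Corr A B) : Prop := Function.Injective E.lmul

/-- A correspondence is regular if its left action is injective with values in the compacts. -/
def Regular (E : Corr A B) : Prop :=
  Function.Injective E.lmul ∧ ∀ a : A, E.lmul a ∈ E.compacts

/-- Katsura's ideal `J_X = φ_X⁻¹(K(X)) ∩ (ker φ_X)^⊥` of a correspondence over `A`. -/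
def katsuraIdeal {A : Type u} [NonUnitalCStarAlgebra A] (E : Corr A A) : Set A :=
  {a : A | E.lmul a ∈ E.compacts ∧ ∀ b : A, E.lmul b = 0 → a * b = 0}

/-- The closed submodule `M · J` of `M` determined by a subset `J ⊆ B`. -/
def smSet (M : Corr A B) (J : Set B) : Set M.X :=
  clspan {ξ : M.X | ∃ (m : M.X) (b : B), b ∈ J ∧ ξ = M.sm m b}

/-- A pair of operators on a correspondence which are adjoint to each other. -/
def IsAdjointPair (W : Corr A B) (T S : W.X →L[ℂ] W.X) : Prop :=
  ∀ ξ η : W.X, W.ip (T ξ) η = W.ip ξ (S η)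

end Corr

/-- The condition `J_X · M ⊆ M · J_Y` on an `A–B` correspondence `M`,
relative to correspondences `X` over `A` and `Y` over `B`. -/
def KatsuraCompat {A B : Type u} [NonUnitalCStarAlgebra A] [NonUnitalCStarAlgebra B]
    (E : Corr A A) (M : Corr A B) (F : Corr B B) : Prop :=
  ∀ a ∈ E.katsuraIdeal, ∀ m : M.X, M.la a m ∈ M.smSet F.katsuraIdeal

/-- An isomorphism of `A–B` correspondences. -/
structure CorrIso {A B : Type u} [NonUnitalCStarAlgebra A] [NonUnitalCStarAlgebra B]
    (E F : Corr A B) where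
  toFun : E.X → F.X
  invFun : F.X → E.X
  left_inv : Function.LeftInverse invFun toFun
  right_inv : Function.RightInverse invFun toFun
  map_add : ∀ x y : E.X, toFun (x + y) = toFun x + toFun y
  map_smul : ∀ (c : ℂ) (x : E.X), toFun (c • x) = c • toFun x
  map_la : ∀ (a : A) (x : E.X), toFun (E.la a x) = F.la a (toFun x)
  map_ip : ∀ x y : E.X, F.ip (toFun x) (toFun y) = E.ip x y

/-- Witness that the correspondence `T` *is* the balanced tensor product `E ⊗_B F`,
via the bilinear map `mk2 : (x, y) ↦ x ⊗ y`. -/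
structure TensorData {A B C : Type u} [NonUnitalCStarAlgebra A] [NonUnitalCStarAlgebra B]
    [NonUnitalCStarAlgebra C] (E : Corr A B) (F : Corr B C) (T : Corr A C) where
  mk2 : E.X → F.X → T.X
  add_l : ∀ (x x' : E.X) (y : F.X), mk2 (x + x') y = mk2 x y + mk2 x' y
  add_r : ∀ (x : E.X) (y y' : F.X), mk2 x (y + y') = mk2 x y + mk2 x y'
  smul_l : ∀ (c : ℂ) (x : E.X) (y : F.X), mk2 (c • x) y = c • mk2 x y
  smul_r : ∀ (c : ℂ) (x : E.X) (y : F.X), mk2 x (c • y) = c • mk2 x y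
  balanced : ∀ (x : E.X) (b : B) (y : F.X), mk2 (E.sm x b) y = mk2 x (F.la b y)
  ip_mk : ∀ (x x' : E.X) (y y' : F.X),
    T.ip (mk2 x y) (mk2 x' y') = F.ip y (F.la (E.ip x x') y')
  la_mk : ∀ (a : A) (x : E.X) (y : F.X), T.la a (mk2 x y) = mk2 (E.la a x) y
  sm_mk : ∀ (x : E.X) (y : F.X) (c : C), T.sm (mk2 x y) c = mk2 x (F.sm y c)
  dense : clspan (Set.range fun p : E.X × F.X => mk2 p.1 p.2) = Set.univ

/-- Witness that `C` is the `A–D` correspondence obtained from the C*-algebra `D`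
by letting `A` act on the left through the map `ψ : A → D` (e.g. the identity
correspondence when `D = A` and `ψ = id`). -/
structure PullCorr {A D : Type u} [NonUnitalCStarAlgebra A] [NonUnitalCStarAlgebra D]
    (ψ : A → D) (C : Corr A D) where
  u : D → C.X
  bij : Function.Bijective u
  add : ∀ d d' : D, u (d + d') = u d + u d'
  smul : ∀ (c : ℂ) (d : D), u (c • d) = c • u d
  ip : ∀ d d' : D, C.ip (u d) (u d') = star d * d'
  la : ∀ (a : A) (d : D), C.la a (u d) = u (ψ a * d)
  sm : ∀ d d' : D, C.sm (u d) d' = u (d * d')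

/-- Witness that `W'` is the `C–D` correspondence obtained from the `B–D` correspondence `W`
by transferring the left action along a homomorphism `σ : C → L(W)`. -/
structure ReCorr {B C D : Type u} [NonUnitalCStarAlgebra B] [NonUnitalCStarAlgebra C]
    [NonUnitalCStarAlgebra D] (W : Corr B D) (σ : C → (W.X →L[ℂ] W.X)) (W' : Corr C D) where
  w : W.X → W'.X
  bij : Function.Bijective w
  add : ∀ ξ η : W.X, w (ξ + η) = w ξ + w η
  smul : ∀ (c : ℂ) (ξ : W.X), w (c • ξ) = c • w ξ
  ip_eq : ∀ ξ η : W.X, W'.ip (w ξ) (w η) = W.ip ξ η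
  sm_eq : ∀ (ξ : W.X) (d : D), w (W.sm ξ d) = W'.sm (w ξ) d
  la_eq : ∀ (c : C) (ξ : W.X), W'.la c (w ξ) = w (σ c ξ)

/-- The structure of an `A–B` imprimitivity bimodule on an `A–B` correspondence `M`:
a compatible left `A`-valued inner product, full on both sides. -/
structure ImpData {A B : Type u} [NonUnitalCStarAlgebra A] [NonUnitalCStarAlgebra B]
    (M : Corr A B) where
  lip : M.X → M.X → A
  lip_add : ∀ x y z : M.X, lip (x + y) z = lip x z + lip y z
  lip_smul : ∀ (c : ℂ) (x y : M.X), lip (c • x) y = c • lip x y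
  lip_star : ∀ x y : M.X, star (lip x y) = lip y x
  lip_la : ∀ (a : A) (x y : M.X), lip (M.la a x) y = a * lip x y
  lip_pos : ∀ x : M.X, ∃ a : A, lip x x = star a * a
  compat : ∀ x y z : M.X, M.la (lip x y) z = M.sm x (M.ip y z)
  full_left : clspan {a : A | ∃ x y : M.X, a = lip x y} = Set.univ
  full_right : clspan {b : B | ∃ x y : M.X, b = M.ip x y} = Set.univ

/-- Witness that the `B–A` correspondence `N` is the dual (conjugate) imprimitivity bimodule
of the `A–B` imprimitivity bimodule `M`. -/
structure DualData {A B : Type u} [NonUnitalCStarAlgebra A] [NonUnitalCStarAlgebra B]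
    (M : Corr A B) (imp : ImpData M) (N : Corr B A) where
  d : M.X → N.X
  bij : Function.Bijective d
  add : ∀ x y : M.X, d (x + y) = d x + d y
  conj_smul : ∀ (c : ℂ) (x : M.X), d (c • x) = (starRingEnd ℂ c) • d x
  la_eq : ∀ (b : B) (x : M.X), N.la b (d x) = d (M.sm x (star b))
  sm_eq : ∀ (x : M.X) (a : A), N.sm (d x) a = d (M.la (star a) x)
  ip_eq : ∀ x y : M.X, N.ip (d x) (d y) = imp.lip x y

/-- Witness that `X` (a correspondence over `A`) is a nondegenerate subcorrespondence of
`Y` (a correspondence over `B`), via `(φ̇, ϕ)`. -/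
structure SubCorr {A B : Type u} [NonUnitalCStarAlgebra A] [NonUnitalCStarAlgebra B]
    (E : Corr A A) (F : Corr B B) where
  φd : E.X → F.X
  φd_inj : Function.Injective φd
  φd_add : ∀ x y : E.X, φd (x + y) = φd x + φd y
  φd_smul : ∀ (c : ℂ) (x : E.X), φd (c • x) = c • φd x
  ϕ : A → B
  ϕ_inj : Function.Injective ϕ
  ϕ_add : ∀ a b : A, ϕ (a + b) = ϕ a + ϕ b
  ϕ_mul : ∀ a b : A, ϕ (a * b) = ϕ a * ϕ b
  ϕ_star : ∀ a : A, ϕ (star a) = star (ϕ a)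
  ϕ_smul : ∀ (c : ℂ) (a : A), ϕ (c • a) = c • ϕ a
  ϕ_nondeg : clspan {b : B | ∃ (a : A) (c : B), b = ϕ a * c} = Set.univ
  la_eq : ∀ (a : A) (x : E.X), φd (E.la a x) = F.la (ϕ a) (φd x)
  ip_eq : ∀ x y : E.X, F.ip (φd x) (φd y) = ϕ (E.ip x y)
  dense : clspan {y : F.X | ∃ (x : E.X) (b : B), y = F.sm (φd x) b} = Set.univ

/-- A representation `(π, t)` of a correspondence `X` over `A` on a C*-algebra `D`. -/
structure CorrRep {A : Type u} [NonUnitalCStarAlgebra A] (E : Corr A A)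
    (D : Type u) [NonUnitalCStarAlgebra D] where
  π : A → D
  t : E.X → D
  π_add : ∀ a b : A, π (a + b) = π a + π b
  π_mul : ∀ a b : A, π (a * b) = π a * π b
  π_star : ∀ a : A, π (star a) = star (π a)
  π_smul : ∀ (c : ℂ) (a : A), π (c • a) = c • π a
  t_add : ∀ x y : E.X, t (x + y) = t x + t y
  t_smul : ∀ (c : ℂ) (x : E.X), t (c • x) = c • t x
  mul_t : ∀ (a : A) (x : E.X), π a * t x = t (E.la a x)
  t_mul : ∀ x y : E.X, star (t x) * t y = π (E.ip x y)

/-- Covariance of a representation on the Katsura ideal: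
`π(a) = Ψ_t(φ_X(a))` for `a ∈ J_X`, expressed by simultaneous approximation of
`φ_X(a)` by finite-rank operators and of `π(a)` by the corresponding finite sums. -/
def CorrRep.Covariant {A : Type u} [NonUnitalCStarAlgebra A] {E : Corr A A}
    {D : Type u} [NonUnitalCStarAlgebra D] (R : CorrRep E D) : Prop :=
  ∀ a ∈ E.katsuraIdeal, ∀ ε > (0 : ℝ), ∃ (k : ℕ) (x y : Fin k → E.X),
    ‖E.lmul a - ∑ i, E.rankOne (x i) (y i)‖ < ε ∧
    ‖R.π a - ∑ i, R.t (x i) * star (R.t (y i))‖ < ε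

/-- The products `t(x₁)⋯t(xₙ)`, i.e. `t^n` applied to elementary tensors. -/
def CorrRep.tProd {A : Type u} [NonUnitalCStarAlgebra A] {E : Corr A A}
    {D : Type u} [NonUnitalCStarAlgebra D] (R : CorrRep E D) :
    (n : ℕ) → (Fin (n + 1) → E.X) → D
  | 0, x => R.t (x 0)
  | (k + 1), x => R.t (x 0) * R.tProd k (fun i => x i.succ)

/-- A Cuntz–Pimsner algebra for `X`: a C*-algebra `O` with a universal injective covariant
representation of `X`, generated by the image of that representation. -/
structure CuntzPimsner {A : Type u} [NonUnitalCStarAlgebra A] (E : Corr A A) :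
    Type (u + 1) where
  O : Type u
  [str : NonUnitalCStarAlgebra O]
  rep : CorrRep E O
  covariant : rep.Covariant
  injective : Function.Injective rep.π
  generates :
    Dense ((NonUnitalStarAlgebra.adjoin ℂ (Set.range rep.π ∪ Set.range rep.t) :
      NonUnitalStarSubalgebra ℂ O) : Set O)
  universal : ∀ (D : Type u) [NonUnitalCStarAlgebra D] (R : CorrRep E D), R.Covariant →
    ∃ ρ : O → D, Continuous ρ ∧
      (∀ p q : O, ρ (p + q) = ρ p + ρ q) ∧
      (∀ (c : ℂ) (p : O), ρ (c • p) = c • ρ p) ∧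
      (∀ p q : O, ρ (p * q) = ρ p * ρ q) ∧
      (∀ p : O, ρ (star p) = star (ρ p)) ∧
      (∀ a : A, ρ (rep.π a) = R.π a) ∧
      (∀ x : E.X, ρ (rep.t x) = R.t x)

attribute [instance] CuntzPimsner.str

/-- The gauge action of the circle on a Cuntz–Pimsner algebra. -/
structure GaugeAction {A : Type u} [NonUnitalCStarAlgebra A] {E : Corr A A}
    (CP : CuntzPimsner E) where
  g : ℂ → CP.O → CP.O
  g_add : ∀ z : ℂ, ‖z‖ = 1 → ∀ S T : CP.O, g z (S + T) = g z S + g z T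
  g_smul : ∀ z : ℂ, ‖z‖ = 1 → ∀ (c : ℂ) (S : CP.O), g z (c • S) = c • g z S
  g_mul : ∀ z : ℂ, ‖z‖ = 1 → ∀ S T : CP.O, g z (S * T) = g z S * g z T
  g_star : ∀ z : ℂ, ‖z‖ = 1 → ∀ S : CP.O, g z (star S) = star (g z S)
  g_comp : ∀ z w : ℂ, ‖z‖ = 1 → ‖w‖ = 1 → ∀ S : CP.O, g (z * w) S = g z (g w S)
  g_one : ∀ S : CP.O, g 1 S = S
  g_cont : ∀ S : CP.O, Continuous fun z : {z : ℂ // ‖z‖ = 1} => g z.1 S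
  g_π : ∀ z : ℂ, ‖z‖ = 1 → ∀ a : A, g z (CP.rep.π a) = CP.rep.π a
  g_t : ∀ z : ℂ, ‖z‖ = 1 → ∀ x : E.X, g z (CP.rep.t x) = z • CP.rep.t x

/-- The data of a morphism `X → Y` in the category `ECCor`: a regular `A–B` correspondence
`M` with `J_X · M ⊆ M · J_Y`, together with a correspondence isomorphism
`U : X ⊗_A M → M ⊗_B Y`. -/
structure EMor {A B : Type u} [NonUnitalCStarAlgebra A] [NonUnitalCStarAlgebra B]
    (E : Corr A A) (F : Corr B B) : Type (u + 1) where
  M : Corr A B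
  regular : M.Regular
  kat : KatsuraCompat E M F
  TXM : Corr A B
  tdXM : TensorData E M TXM
  TMY : Corr A B
  tdMY : TensorData M F TMY
  U : CorrIso TXM TMY

/-- Two morphism data `(M, U_M)` and `(M', U_{M'})` are isomorphic:
there is an isomorphism `ξ : M → M'` with `U_{M'} ∘ (1_X ⊗ ξ) = (ξ ⊗ 1_Y) ∘ U_M`. -/
def EMorEquiv {A B : Type u} [NonUnitalCStarAlgebra A] [NonUnitalCStarAlgebra B]
    {E : Corr A A} {F : Corr B B} (m m' : EMor E F) : Prop :=
  ∃ ξ : CorrIso m.M m'.M,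
  ∃ Ξ : m.TMY.X → m'.TMY.X,
    (∀ ζ η, Ξ (ζ + η) = Ξ ζ + Ξ η) ∧
    (∀ (c : ℂ) ζ, Ξ (c • ζ) = c • Ξ ζ) ∧
    Continuous Ξ ∧
    (∀ (mm : m.M.X) (y : F.X), Ξ (m.tdMY.mk2 mm y) = m'.tdMY.mk2 (ξ.toFun mm) y) ∧
    (∀ (x : E.X) (mm : m.M.X),
      m'.U.toFun (m'.tdXM.mk2 x (ξ.toFun mm)) = Ξ (m.U.toFun (m.tdXM.mk2 x mm)))

/-- `p` is a composite of `m : X → Y` and `n : Y → Z` in `ECCor`: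
`p.M = M ⊗_B N` and `U_P = (1_M ⊗ U_N)(U_M ⊗ 1_N)` modulo the canonical identifications. -/
def EIsComposite {A B C : Type u} [NonUnitalCStarAlgebra A] [NonUnitalCStarAlgebra B]
    [NonUnitalCStarAlgebra C] {E : Corr A A} {F : Corr B B} {G : Corr C C}
    (m : EMor E F) (n : EMor F G) (p : EMor E G) : Prop :=
  ∃ td : TensorData m.M n.M p.M,
  ∃ Ξ : m.M.X → n.TMY.X → p.TMY.X,       -- m ⊗ (n ⊗ z) ↦ (m ⊗ n) ⊗ z
  ∃ Θ : m.TMY.X → n.M.X → p.TMY.X,       -- (m ⊗ y) ⊗ n ↦ m ⊗ U_N(y ⊗ n)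
    (∀ mm : m.M.X, (∀ ζ η, Ξ mm (ζ + η) = Ξ mm ζ + Ξ mm η) ∧
      (∀ (c : ℂ) ζ, Ξ mm (c • ζ) = c • Ξ mm ζ) ∧ Continuous (Ξ mm)) ∧
    (∀ (mm : m.M.X) (nn : n.M.X) (z : G.X),
      Ξ mm (n.tdMY.mk2 nn z) = p.tdMY.mk2 (td.mk2 mm nn) z) ∧
    (∀ nn : n.M.X, (∀ ζ η, Θ (ζ + η) nn = Θ ζ nn + Θ η nn) ∧
      (∀ (c : ℂ) ζ, Θ (c • ζ) nn = c • Θ ζ nn) ∧ Continuous (fun ζ => Θ ζ nn)) ∧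
    (∀ (mm : m.M.X) (y : F.X) (nn : n.M.X),
      Θ (m.tdMY.mk2 mm y) nn = Ξ mm (n.U.toFun (n.tdXM.mk2 y nn))) ∧
    (∀ (x : E.X) (mm : m.M.X) (nn : n.M.X),
      p.U.toFun (p.tdXM.mk2 x (td.mk2 mm nn)) = Θ (m.U.toFun (m.tdXM.mk2 x mm)) nn)

/-- `e` is an identity morphism on `X` in `ECCor`: `e.M` is the identity correspondence `A`
and `U_A = i_l⁻¹ ∘ i_r : X ⊗_A A → A ⊗_A X`, i.e. `i_l (U_A (x ⊗ a)) = x · a`. -/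
def EIsIdentity {A : Type u} [NonUnitalCStarAlgebra A] {E : Corr A A}
    (e : EMor E E) : Prop :=
  ∃ idd : PullCorr (fun a : A => a) e.M,
  ∃ il : e.TMY.X → E.X,
    (∀ ζ η, il (ζ + η) = il ζ + il η) ∧
    (∀ (c : ℂ) ζ, il (c • ζ) = c • il ζ) ∧
    Continuous il ∧
    Function.Injective il ∧
    (∀ (a : A) (x : E.X), il (e.tdMY.mk2 (idd.u a) x) = E.la a x) ∧
    (∀ (x : E.X) (a : A), il (e.U.toFun (e.tdXM.mk2 x (idd.u a))) = E.sm x a)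

/-- A morphism in `ECCor` is an isomorphism: it has a two-sided inverse up to
isomorphism of morphism data. -/
def EIsEIso {A B : Type u} [NonUnitalCStarAlgebra A] [NonUnitalCStarAlgebra B]
    {E : Corr A A} {F : Corr B B} (m : EMor E F) : Prop :=
  ∃ (n : EMor F E) (p : EMor E E) (q : EMor F F) (e : EMor E E) (f : EMor F F),
    EIsComposite m n p ∧ EIsIdentity e ∧ EMorEquiv p e ∧
    EIsComposite n m q ∧ EIsIdentity f ∧ EMorEquiv q f

/-- The standing data for the C-covariant representation of `X` on `K(M ⊗_B O_Y)`
associated with a morphism `[M, U_M] : X → Y` in `ECCor`:  `O_Y` regarded as a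
`B–O_Y` correspondence, the tensor product `W = M ⊗_B O_Y`, the canonical map
`Λ : (M ⊗_B Y) × O_Y → W`, `(m ⊗ y, S) ↦ m ⊗ t_Y(y)S`, and the operators
`Φ(x) = (1_M ⊗ V_Y)(T(x) ⊗ 1_{O_Y})`. -/
structure CCovSetup {A B : Type u} [NonUnitalCStarAlgebra A] [NonUnitalCStarAlgebra B]
    {E : Corr A A} {F : Corr B B} (m : EMor E F) (CPY : CuntzPimsner F) :
    Type (u + 1) where
  OYc : Corr B CPY.O
  pcY : PullCorr CPY.rep.π OYc
  W : Corr A CPY.O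
  tdW : TensorData m.M OYc W
  Λ : m.TMY.X → CPY.O → W.X
  Λ_add : ∀ (S : CPY.O) (ζ η : m.TMY.X), Λ (ζ + η) S = Λ ζ S + Λ η S
  Λ_smul : ∀ (S : CPY.O) (c : ℂ) (ζ : m.TMY.X), Λ (c • ζ) S = c • Λ ζ S
  Λ_cont : ∀ S : CPY.O, Continuous fun ζ => Λ ζ S
  Λ_mk : ∀ (mm : m.M.X) (y : F.X) (S : CPY.O),
    Λ (m.tdMY.mk2 mm y) S = tdW.mk2 mm (pcY.u (CPY.rep.t y * S))
  Φ : E.X → (W.X →L[ℂ] W.X)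
  Φ_mk : ∀ (x : E.X) (mm : m.M.X) (S : CPY.O),
    Φ x (tdW.mk2 mm (pcY.u S)) = Λ (m.U.toFun (m.tdXM.mk2 x mm)) S

/-- The homomorphism `σ : O_X → K(M ⊗_B O_Y) ⊆ L(M ⊗_B O_Y)` induced by
the C-covariant representation. -/
structure SigmaData {A B : Type u} [NonUnitalCStarAlgebra A] [NonUnitalCStarAlgebra B]
    {E : Corr A A} {F : Corr B B} {m : EMor E F} {CPY : CuntzPimsner F}
    (st : CCovSetup m CPY) (CPX : CuntzPimsner E) where
  σ : CPX.O → (st.W.X →L[ℂ] st.W.X)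
  σ_add : ∀ S T : CPX.O, σ (S + T) = σ S + σ T
  σ_smul : ∀ (c : ℂ) (S : CPX.O), σ (c • S) = c • σ S
  σ_mul : ∀ S T : CPX.O, σ (S * T) = (σ S).comp (σ T)
  σ_star : ∀ S : CPX.O, st.W.IsAdjointPair (σ S) (σ (star S))
  σ_cont : Continuous σ
  σ_t : ∀ x : E.X, σ (CPX.rep.t x) = st.Φ x
  σ_π : ∀ a : A, σ (CPX.rep.π a) = st.W.lmul a

/-- A bundled C*-correspondence over a C*-algebra. -/
structure BCorr : Type (u + 1) where
  alg : Type u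
  [str : NonUnitalCStarAlgebra alg]
  cor : Corr alg alg

attribute [instance] BCorr.str

/-- Elementary strong shift equivalence through *regular* correspondences `R`, `S`:
`X ≅ R ⊗_B S` and `Y ≅ S ⊗_A R`. -/
def ElemSSERegular (E F : BCorr) : Prop :=
  ∃ (R : Corr E.alg F.alg) (S : Corr F.alg E.alg)
    (T₁ : Corr E.alg E.alg) (_ : TensorData R S T₁)
    (T₂ : Corr F.alg F.alg) (_ : TensorData S R T₂),
    R.Regular ∧ S.Regular ∧ Nonempty (CorrIso T₁ E.cor) ∧ Nonempty (CorrIso T₂ F.cor)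

/-- Strong shift equivalence (with all intermediate data regular). -/
def StrongSSERegular (E F : BCorr) : Prop :=
  ∃ (n : ℕ) (Z : Fin (n + 1) → BCorr),
    Z 0 = E ∧ Z (Fin.last n) = F ∧
    (∀ i, (Z i).cor.Regular) ∧
    ∀ i : Fin n, ElemSSERegular (Z i.castSucc) (Z i.succ)

/-- The tower of tensor powers `X^{⊗ k}` of a correspondence `X` over `A`
(with `X^{⊗ 0} = A`), together with the "append on the right" maps
`X^{⊗ k} × X → X^{⊗ (k+1)}`. -/
structure PowerTower {A : Type u} [NonUnitalCStarAlgebra A] (E : Corr A A) :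
    Type (u + 1) where
  P : ℕ → Corr A A
  zero : PullCorr (fun a : A => a) (P 0)
  step : ∀ k : ℕ, TensorData E (P k) (P (k + 1))
  app : ∀ k : ℕ, (P k).X → E.X → (P (k + 1)).X
  app_add : ∀ (k : ℕ) (y : E.X) (w w' : (P k).X), app k (w + w') y = app k w y + app k w' y
  app_smul : ∀ (k : ℕ) (y : E.X) (c : ℂ) (w : (P k).X), app k (c • w) y = c • app k w y
  app_cont : ∀ (k : ℕ) (y : E.X), Continuous fun w => app k w y
  app_base : ∀ (a : A) (y : E.X) (b : A),
    (P 1).sm (app 0 (zero.u a) y) b = (step 0).mk2 (E.la a y) (zero.u b)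
  app_step : ∀ (k : ℕ) (x : E.X) (w : (P k).X) (y : E.X),
    app (k + 1) ((step k).mk2 x w) y = (step (k + 1)).mk2 x (app k w y)

end

noncomputable section

universe u

section Statement4Aux

/-- Closed-subspace principle for `clspan`. -/
theorem clspan_le' {V : Type*} [NormedAddCommGroup V] [NormedSpace ℂ V]
    {s : Set V} {P : V → Prop} (h0 : P 0) (hadd : ∀ x y, P x → P y → P (x + y))
    (hsmul : ∀ (c : ℂ) (x : V), P x → P (c • x)) (hcl : IsClosed {x | P x})
    (hs : ∀ x ∈ s, P x) : ∀ x ∈ clspan s, P x := fun x hx =>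
  closure_minimal
    (fun _ hy => Submodule.span_induction hs h0 (fun a b _ _ => hadd a b)
      (fun c a _ => hsmul c a) hy) hcl hx

namespace Corr

variable {A B : Type u} [NonUnitalCStarAlgebra A] [NonUnitalCStarAlgebra B] (W : Corr A B)

theorem la_zero (a : A) : W.la a 0 = 0 := by
  have h := W.la_add a 0 0
  rw [add_zero] at h
  exact left_eq_add.mp h

theorem la_zero_left (x : W.X) : W.la 0 x = 0 := by
  have h := W.la_add' 0 0 x
  rw [add_zero] at h
  exact left_eq_add.mp h

theorem sm_zero (b : B) : W.sm 0 b = 0 := by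
  have h := W.sm_add 0 0 b
  rw [add_zero] at h
  exact left_eq_add.mp h

theorem ip_zero_right (x : W.X) : W.ip x 0 = 0 := by
  have h := W.ip_add x 0 0
  rw [add_zero] at h
  exact left_eq_add.mp h

theorem ip_zero_left (x : W.X) : W.ip 0 x = 0 := by
  rw [← W.ip_star, W.ip_zero_right, star_zero]

theorem ip_add_left (x y z : W.X) : W.ip (x + y) z = W.ip x z + W.ip y z := by
  rw [← W.ip_star, W.ip_add, star_add, W.ip_star, W.ip_star]

theorem ip_smul_left (c : ℂ) (x y : W.X) : W.ip (c • x) y = star c • W.ip x y := by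
  rw [← W.ip_star, W.ip_smul, star_smul, W.ip_star]

theorem lmul_zero : W.lmul 0 = 0 := by
  ext x
  exact W.la_zero_left x

theorem lmul_apply (a : A) (x : W.X) : W.lmul a x = W.la a x := rfl

/-- `⟨x, ·⟩` as a continuous linear map. -/
def ipCLM (x : W.X) : W.X →L[ℂ] B :=
  LinearMap.mkContinuous
    { toFun := W.ip x
      map_add' := W.ip_add x
      map_smul' := fun c y => W.ip_smul c x y } ‖x‖ (W.ip_bound x)

theorem ipCLM_apply (x y : W.X) : W.ipCLM x y = W.ip x y := rfl

/-- Right multiplication by `b` as a continuous linear map. -/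
def smCLM (b : B) : W.X →L[ℂ] W.X :=
  LinearMap.mkContinuous
    { toFun := fun x => W.sm x b
      map_add' := fun x y => W.sm_add x y b
      map_smul' := fun c x => W.sm_smul c x b } ‖b‖
    (fun x => by rw [mul_comm]; exact W.sm_bound x b)

theorem smCLM_apply (b : B) (x : W.X) : W.smCLM b x = W.sm x b := rfl

end Corr

section CPAux

variable {A : Type u} [NonUnitalCStarAlgebra A] {E : Corr A A} (CP : CuntzPimsner E)

theorem pi_zero : CP.rep.π 0 = 0 := by
  have h := CP.rep.π_add 0 0
  rw [add_zero] at h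
  exact left_eq_add.mp h

theorem t_zero : CP.rep.t 0 = 0 := by
  have h := CP.rep.t_add 0 0
  rw [add_zero] at h
  exact left_eq_add.mp h

/-- `π` as a non-unital star algebra homomorphism. -/
def piHom : A →⋆ₙₐ[ℂ] CP.O where
  toFun := CP.rep.π
  map_smul' := CP.rep.π_smul
  map_zero' := pi_zero CP
  map_add' := CP.rep.π_add
  map_mul' := CP.rep.π_mul
  map_star' := CP.rep.π_star

theorem norm_pi_le (a : A) : ‖CP.rep.π a‖ ≤ ‖a‖ :=
  NonUnitalStarAlgHom.norm_apply_le (piHom CP) a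

theorem norm_t_le (x : E.X) : ‖CP.rep.t x‖ ≤ ‖x‖ := by
  have h1 : ‖star (CP.rep.t x) * CP.rep.t x‖ = ‖CP.rep.t x‖ * ‖CP.rep.t x‖ :=
    CStarRing.norm_star_mul_self
  rw [CP.rep.t_mul] at h1
  have h2 : ‖CP.rep.π (E.ip x x)‖ ≤ ‖E.ip x x‖ := norm_pi_le CP _
  have h3 : ‖x‖ ^ 2 = ‖E.ip x x‖ := E.ip_norm x
  nlinarith [norm_nonneg (CP.rep.t x), norm_nonneg x]

/-- `t` as a continuous linear map. -/
def tCLM : E.X →L[ℂ] CP.O :=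
  LinearMap.mkContinuous
    { toFun := CP.rep.t
      map_add' := CP.rep.t_add
      map_smul' := CP.rep.t_smul } 1
    (fun x => by rw [one_mul]; exact norm_t_le CP x)

theorem tCLM_apply (x : E.X) : tCLM CP x = CP.rep.t x := rfl

/-- The generating set `{t(x)S}`. -/
def tSet : Set CP.O := {z : CP.O | ∃ (x : E.X) (S' : CP.O), z = CP.rep.t x * S'}

/-- The closed linear span of `{t(x)S}` as a submodule. -/
def Isub : Submodule ℂ CP.O := (Submodule.span ℂ (tSet CP)).topologicalClosure

theorem Isub_coe : (Isub CP : Set CP.O) = clspan (tSet CP) := by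
  unfold clspan
  exact Submodule.topologicalClosure_coe _

theorem mem_Isub {z : CP.O} : z ∈ Isub CP ↔ z ∈ clspan (tSet CP) := by
  rw [← SetLike.mem_coe, Isub_coe]

theorem isClosed_Isub : IsClosed (Isub CP : Set CP.O) :=
  Submodule.isClosed_topologicalClosure _

theorem tSet_sub : ∀ z ∈ tSet CP, z ∈ Isub CP := fun _ hz =>
  Submodule.le_topologicalClosure _ (Submodule.subset_span hz)

theorem pi_mul_mem (a : A) (ha : a ∈ E.katsuraIdeal) (S : CP.O) :
    CP.rep.π a * S ∈ Isub CP := by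
  rw [mem_Isub]
  show CP.rep.π a * S ∈ closure _
  rw [Metric.mem_closure_iff]
  intro ε hε
  obtain ⟨k, x, y, -, h2⟩ := CP.covariant a ha (ε / (‖S‖ + 1)) (by positivity)
  refine ⟨∑ i, CP.rep.t (x i) * (star (CP.rep.t (y i)) * S),
    Submodule.sum_mem _ fun i _ =>
      Submodule.subset_span ⟨x i, star (CP.rep.t (y i)) * S, rfl⟩, ?_⟩
  have e : (∑ i, CP.rep.t (x i) * (star (CP.rep.t (y i)) * S))
      = (∑ i, CP.rep.t (x i) * star (CP.rep.t (y i))) * S := by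
    rw [Finset.sum_mul]
    simp [mul_assoc]
  rw [dist_eq_norm, e, ← sub_mul]
  have h4 := norm_mul_le (CP.rep.π a - ∑ i, CP.rep.t (x i) * star (CP.rep.t (y i))) S
  have h5 : ‖CP.rep.π a - ∑ i, CP.rep.t (x i) * star (CP.rep.t (y i))‖ * (‖S‖ + 1) < ε :=
    (lt_div_iff₀ (by positivity)).mp h2
  nlinarith [norm_nonneg S,
    norm_nonneg (CP.rep.π a - ∑ i, CP.rep.t (x i) * star (CP.rep.t (y i)))]

theorem mem_katsura_of_regular (hreg : E.Regular) (a : A) : a ∈ E.katsuraIdeal := by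
  refine ⟨hreg.2 a, fun b hb => ?_⟩
  have hb0 : b = 0 := hreg.1 (hb.trans E.lmul_zero.symm)
  rw [hb0, mul_zero]

theorem Isub_mul {p : CP.O} (hp : p ∈ Isub CP) (S : CP.O) : p * S ∈ Isub CP := by
  refine clspan_le' (P := fun q => q * S ∈ Isub CP) ?_ ?_ ?_ ?_ ?_ p ((mem_Isub CP).mp hp)
  · show (0 : CP.O) * S ∈ Isub CP
    rw [zero_mul]; exact zero_mem _
  · intro u v hu hv; show (u + v) * S ∈ Isub CP
    rw [add_mul]; exact add_mem hu hv
  · intro c u hu; show (c • u) * S ∈ Isub CP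
    rw [smul_mul_assoc]; exact Submodule.smul_mem _ c hu
  · have hset : {q : CP.O | q * S ∈ Isub CP}
        = (fun q : CP.O => q * S) ⁻¹' (Isub CP : Set CP.O) := rfl
    rw [hset]; exact (isClosed_Isub CP).preimage (continuous_mul_right S)
  · rintro z ⟨x, S', rfl⟩
    exact tSet_sub CP _ ⟨x, S' * S, by rw [mul_assoc]⟩

theorem pi_mem (hreg : E.Regular) (a : A) : CP.rep.π a ∈ Isub CP := by
  rw [mem_Isub]
  show CP.rep.π a ∈ closure _
  rw [Metric.mem_closure_iff]
  intro ε hε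
  obtain ⟨k, x, y, -, h2⟩ := CP.covariant a (mem_katsura_of_regular hreg a) ε hε
  exact ⟨∑ i, CP.rep.t (x i) * star (CP.rep.t (y i)),
    Submodule.sum_mem _ fun i _ => Submodule.subset_span ⟨x i, star (CP.rep.t (y i)), rfl⟩,
    by rw [dist_eq_norm]; exact h2⟩

theorem t_mem (hreg : E.Regular) (x : E.X) : CP.rep.t x ∈ Isub CP := by
  have hx : x ∈ clspan {y : E.X | ∃ (a : A) (x' : E.X), y = E.la a x'} := by
    rw [E.nondeg]; trivial
  refine clspan_le' (P := fun u => CP.rep.t u ∈ Isub CP) ?_ ?_ ?_ ?_ ?_ x hx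
  · show CP.rep.t 0 ∈ Isub CP
    rw [t_zero]; exact zero_mem _
  · intro u v hu hv; show CP.rep.t (u + v) ∈ Isub CP
    rw [CP.rep.t_add]; exact add_mem hu hv
  · intro c u hu; show CP.rep.t (c • u) ∈ Isub CP
    rw [CP.rep.t_smul]; exact Submodule.smul_mem _ c hu
  · have hset : {u : E.X | CP.rep.t u ∈ Isub CP} = tCLM CP ⁻¹' (Isub CP : Set CP.O) := rfl
    rw [hset]; exact (isClosed_Isub CP).preimage (tCLM CP).continuous
  · rintro z ⟨a, x', rfl⟩
    rw [← CP.rep.mul_t]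
    exact Isub_mul CP (pi_mem CP hreg a) _

theorem star_t_mul_mem (hreg : E.Regular) (y : E.X) {m : CP.O} (hm : m ∈ Isub CP) :
    star (CP.rep.t y) * m ∈ Isub CP := by
  refine clspan_le' (P := fun m => star (CP.rep.t y) * m ∈ Isub CP)
    ?_ ?_ ?_ ?_ ?_ m ((mem_Isub CP).mp hm)
  · show star (CP.rep.t y) * 0 ∈ Isub CP
    rw [mul_zero]; exact zero_mem _
  · intro u v hu hv; show star (CP.rep.t y) * (u + v) ∈ Isub CP
    rw [mul_add]; exact add_mem hu hv
  · intro c u hu; show star (CP.rep.t y) * (c • u) ∈ Isub CP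
    rw [mul_smul_comm]; exact Submodule.smul_mem _ c hu
  · have hset : {m : CP.O | star (CP.rep.t y) * m ∈ Isub CP}
        = (fun m : CP.O => star (CP.rep.t y) * m) ⁻¹' (Isub CP : Set CP.O) := rfl
    rw [hset]; exact (isClosed_Isub CP).preimage (continuous_mul_left _)
  · rintro z ⟨x, S', rfl⟩
    rw [← mul_assoc, CP.rep.t_mul]
    exact Isub_mul CP (pi_mem CP hreg _) _

theorem star_t_mem (hreg : E.Regular) (x : E.X) : star (CP.rep.t x) ∈ Isub CP := by
  have hx : x ∈ clspan {y : E.X | ∃ (a : A) (x' : E.X), y = E.la a x'} := by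
    rw [E.nondeg]; trivial
  refine clspan_le' (P := fun u => star (CP.rep.t u) ∈ Isub CP) ?_ ?_ ?_ ?_ ?_ x hx
  · show star (CP.rep.t 0) ∈ Isub CP
    rw [t_zero, star_zero]; exact zero_mem _
  · intro u v hu hv; show star (CP.rep.t (u + v)) ∈ Isub CP
    rw [CP.rep.t_add, star_add]; exact add_mem hu hv
  · intro c u hu; show star (CP.rep.t (c • u)) ∈ Isub CP
    rw [CP.rep.t_smul, star_smul]; exact Submodule.smul_mem _ _ hu
  · have hset : {u : E.X | star (CP.rep.t u) ∈ Isub CP}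
        = (fun u : E.X => star (tCLM CP u)) ⁻¹' (Isub CP : Set CP.O) := rfl
    rw [hset]
    exact (isClosed_Isub CP).preimage (continuous_star.comp (tCLM CP).continuous)
  · rintro z ⟨a, x', rfl⟩
    rw [← CP.rep.mul_t, star_mul, ← CP.rep.π_star]
    exact star_t_mul_mem CP hreg x' (pi_mem CP hreg (star a))

theorem dense_Isub (hreg : E.Regular) (S : CP.O) : S ∈ Isub CP := by
  have hd := CP.generates.closure_eq
  have hS : S ∈ closure ((NonUnitalStarAlgebra.adjoin ℂ
      (Set.range CP.rep.π ∪ Set.range CP.rep.t) :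
      NonUnitalStarSubalgebra ℂ CP.O) : Set CP.O) := by
    rw [hd]; trivial
  refine closure_minimal ?_ (isClosed_Isub CP) hS
  intro z hz
  have hz' : z ∈ NonUnitalAlgebra.adjoin ℂ ((Set.range CP.rep.π ∪ Set.range CP.rep.t)
      ∪ star (Set.range CP.rep.π ∪ Set.range CP.rep.t)) := hz
  refine NonUnitalAlgebra.adjoin_induction ?_ ?_ ?_ ?_ ?_ hz'
  · rintro w hw
    rcases hw with hw | hw
    · rcases hw with ⟨a, rfl⟩ | ⟨x, rfl⟩
      · exact pi_mem CP hreg a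
      · exact t_mem CP hreg x
    · rw [Set.mem_star] at hw
      rcases hw with ⟨a, ha⟩ | ⟨x, hx⟩
      · have hwa : w = CP.rep.π (star a) := by rw [CP.rep.π_star, ha, star_star]
        rw [hwa]; exact pi_mem CP hreg (star a)
      · have hwx : w = star (CP.rep.t x) := by rw [hx, star_star]
        rw [hwx]; exact star_t_mem CP hreg x
  · intro u v _ _ hu hv; exact add_mem hu hv
  · exact zero_mem _
  · intro u v _ _ hu _; exact Isub_mul CP hu v
  · intro c u _ hu; exact Submodule.smul_mem _ c hu

end CPAux

section GamAux

variable {A : Type u} [NonUnitalCStarAlgebra A] {E : Corr A A} (CP : CuntzPimsner E)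
  (OXc : Corr A CP.O) (pc : PullCorr CP.rep.π OXc)
  (TT : Corr A CP.O) (td : TensorData E OXc TT)

/-- The generating set of the graph of `Φ`. -/
def GSet : Set (TT.X × CP.O) :=
  {v | ∃ (x : E.X) (S : CP.O), v = (td.mk2 x (pc.u S), CP.rep.t x * S)}

/-- The graph of `Φ`: the closed linear span of the generating pairs. -/
def Gam : Submodule ℂ (TT.X × CP.O) :=
  (Submodule.span ℂ (GSet CP OXc pc TT td)).topologicalClosure

theorem Gam_coe : (Gam CP OXc pc TT td : Set (TT.X × CP.O)) = clspan (GSet CP OXc pc TT td) := by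
  unfold clspan
  exact Submodule.topologicalClosure_coe _

theorem mem_Gam {v : TT.X × CP.O} :
    v ∈ Gam CP OXc pc TT td ↔ v ∈ clspan (GSet CP OXc pc TT td) := by
  rw [← SetLike.mem_coe, Gam_coe]

theorem isClosed_Gam : IsClosed (Gam CP OXc pc TT td : Set (TT.X × CP.O)) :=
  Submodule.isClosed_topologicalClosure _

theorem GSet_sub : ∀ v ∈ GSet CP OXc pc TT td, v ∈ Gam CP OXc pc TT td := fun _ hv =>
  Submodule.le_topologicalClosure _ (Submodule.subset_span hv)

theorem Gam_key : ∀ v ∈ Gam CP OXc pc TT td, ∀ w ∈ Gam CP OXc pc TT td,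
    star v.2 * w.2 = TT.ip v.1 w.1 := by
  have hgg : ∀ v ∈ GSet CP OXc pc TT td, ∀ w ∈ GSet CP OXc pc TT td,
      star v.2 * w.2 = TT.ip v.1 w.1 := by
    rintro v ⟨x, S, rfl⟩ w ⟨x', S', rfl⟩
    show star (CP.rep.t x * S) * (CP.rep.t x' * S')
        = TT.ip (td.mk2 x (pc.u S)) (td.mk2 x' (pc.u S'))
    rw [td.ip_mk, pc.la, pc.ip, star_mul, ← CP.rep.t_mul]
    simp [mul_assoc]
  have h1 : ∀ v ∈ Submodule.span ℂ (GSet CP OXc pc TT td),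
      ∀ w ∈ Submodule.span ℂ (GSet CP OXc pc TT td), star v.2 * w.2 = TT.ip v.1 w.1 := by
    intro v hv
    refine Submodule.span_induction (p := fun v _ => ∀ w ∈ Submodule.span ℂ (GSet CP OXc pc TT td),
      star v.2 * w.2 = TT.ip v.1 w.1) ?_ ?_ ?_ ?_ hv
    · intro v hvG w hw
      refine Submodule.span_induction (p := fun w _ => star v.2 * w.2 = TT.ip v.1 w.1)
        ?_ ?_ ?_ ?_ hw
      · intro w hwG; exact hgg v hvG w hwG
      · show star v.2 * (0 : TT.X × CP.O).2 = TT.ip v.1 (0 : TT.X × CP.O).1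
        rw [Prod.snd_zero, Prod.fst_zero, mul_zero, TT.ip_zero_right]
      · intro w w' _ _ hw hw'
        show star v.2 * (w + w').2 = TT.ip v.1 (w + w').1
        rw [Prod.snd_add, Prod.fst_add, mul_add, TT.ip_add, hw, hw']
      · intro c w _ hw
        show star v.2 * (c • w).2 = TT.ip v.1 (c • w).1
        rw [Prod.smul_snd, Prod.smul_fst, mul_smul_comm, TT.ip_smul, hw]
    · intro w hw
      show star (0 : TT.X × CP.O).2 * w.2 = TT.ip (0 : TT.X × CP.O).1 w.1
      rw [Prod.snd_zero, Prod.fst_zero, star_zero, zero_mul, TT.ip_zero_left]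
    · intro u v _ _ hu hv w hw
      show star (u + v).2 * w.2 = TT.ip (u + v).1 w.1
      rw [Prod.snd_add, Prod.fst_add, star_add, add_mul, TT.ip_add_left, hu w hw, hv w hw]
    · intro c u _ hu w hw
      show star (c • u).2 * w.2 = TT.ip (c • u).1 w.1
      rw [Prod.smul_snd, Prod.smul_fst, star_smul, smul_mul_assoc, TT.ip_smul_left, hu w hw]
  have h2 : ∀ v ∈ Gam CP OXc pc TT td, ∀ w ∈ Submodule.span ℂ (GSet CP OXc pc TT td),
      star v.2 * w.2 = TT.ip v.1 w.1 := by
    intro v hv w hw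
    have hcl : IsClosed {v : TT.X × CP.O | star v.2 * w.2 = TT.ip v.1 w.1} := by
      apply isClosed_eq
      · exact (continuous_star.comp continuous_snd).mul continuous_const
      · have he : (fun v : TT.X × CP.O => TT.ip v.1 w.1)
            = fun v : TT.X × CP.O => star (TT.ipCLM w.1 v.1) := by
          funext v
          rw [TT.ipCLM_apply, TT.ip_star]
        rw [he]
        exact continuous_star.comp ((TT.ipCLM w.1).continuous.comp continuous_fst)
    have hv' : v ∈ closure ((Submodule.span ℂ (GSet CP OXc pc TT td) :
        Submodule ℂ (TT.X × CP.O)) : Set (TT.X × CP.O)) := (mem_Gam CP OXc pc TT td).mp hv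
    exact closure_minimal (fun u hu => h1 u hu w hw) hcl hv'
  intro v hv w hw
  have hcl : IsClosed {w : TT.X × CP.O | star v.2 * w.2 = TT.ip v.1 w.1} := by
    apply isClosed_eq
    · exact continuous_const.mul continuous_snd
    · exact (TT.ipCLM v.1).continuous.comp continuous_fst
  have hw' : w ∈ closure ((Submodule.span ℂ (GSet CP OXc pc TT td) :
      Submodule ℂ (TT.X × CP.O)) : Set (TT.X × CP.O)) := (mem_Gam CP OXc pc TT td).mp hw
  exact closure_minimal (fun u hu => h2 v hv u hu) hcl hw'

theorem Gam_norm : ∀ v ∈ Gam CP OXc pc TT td, ‖v.2‖ = ‖v.1‖ := by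
  intro v hv
  have h := Gam_key CP OXc pc TT td v hv v hv
  have h1 : ‖star v.2 * v.2‖ = ‖v.2‖ * ‖v.2‖ := CStarRing.norm_star_mul_self
  rw [h] at h1
  have h2 : ‖v.1‖ ^ 2 = ‖TT.ip v.1 v.1‖ := TT.ip_norm v.1
  have hsq : ‖v.2‖ ^ 2 = ‖v.1‖ ^ 2 := by rw [sq, ← h1, ← h2]
  calc ‖v.2‖ = Real.sqrt (‖v.2‖ ^ 2) := (Real.sqrt_sq (norm_nonneg _)).symm
    _ = Real.sqrt (‖v.1‖ ^ 2) := by rw [hsq]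
    _ = ‖v.1‖ := Real.sqrt_sq (norm_nonneg _)

theorem Gam_total (ζ : TT.X) : ∃ p : CP.O, (ζ, p) ∈ Gam CP OXc pc TT td := by
  have hζ : ζ ∈ clspan (Set.range fun p : E.X × OXc.X => td.mk2 p.1 p.2) := by
    rw [td.dense]; trivial
  obtain ⟨u, hu, hconv⟩ := mem_closure_iff_seq_limit.mp hζ
  have hmem : ∀ n : ℕ, ∃ p, (u n, p) ∈ Gam CP OXc pc TT td := by
    intro n
    refine Submodule.span_induction
      (p := fun η _ => ∃ p, (η, p) ∈ Gam CP OXc pc TT td) ?_ ?_ ?_ ?_ (hu n)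
    · rintro η ⟨⟨x, w⟩, rfl⟩
      obtain ⟨S, rfl⟩ := pc.bij.2 w
      exact ⟨CP.rep.t x * S, GSet_sub CP OXc pc TT td _ ⟨x, S, rfl⟩⟩
    · exact ⟨0, zero_mem _⟩
    · rintro η η' _ _ ⟨p, hp⟩ ⟨q, hq⟩
      exact ⟨p + q, add_mem hp hq⟩
    · rintro c η _ ⟨p, hp⟩
      exact ⟨c • p, Submodule.smul_mem _ c hp⟩
  choose p hp using hmem
  have hcu : CauchySeq u := hconv.cauchySeq
  have hcp : CauchySeq p := by
    rw [Metric.cauchySeq_iff] at hcu ⊢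
    intro ε hε
    obtain ⟨N, hN⟩ := hcu ε hε
    refine ⟨N, fun m hm n hn => ?_⟩
    have hd := Gam_norm CP OXc pc TT td _ (sub_mem (hp m) (hp n))
    rw [dist_eq_norm]
    calc ‖p m - p n‖ = ‖u m - u n‖ := by simpa using hd
      _ < ε := by rw [← dist_eq_norm]; exact hN m hm n hn
  obtain ⟨q, hq⟩ := cauchySeq_tendsto_of_complete hcp
  exact ⟨q, (isClosed_Gam CP OXc pc TT td).mem_of_tendsto (hconv.prodMk_nhds hq)
    (Filter.Eventually.of_forall hp)⟩

theorem Gam_la (a : A) : ∀ v ∈ Gam CP OXc pc TT td,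
    (TT.la a v.1, CP.rep.π a * v.2) ∈ Gam CP OXc pc TT td := by
  intro v hv
  refine clspan_le' (P := fun v : TT.X × CP.O =>
    (TT.la a v.1, CP.rep.π a * v.2) ∈ Gam CP OXc pc TT td)
    ?_ ?_ ?_ ?_ ?_ v ((mem_Gam CP OXc pc TT td).mp hv)
  · show (TT.la a (0 : TT.X × CP.O).1, CP.rep.π a * (0 : TT.X × CP.O).2) ∈ _
    rw [Prod.fst_zero, Prod.snd_zero, TT.la_zero, mul_zero]
    exact zero_mem _
  · intro u w hu hw
    show (TT.la a (u + w).1, CP.rep.π a * (u + w).2) ∈ _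
    rw [Prod.fst_add, Prod.snd_add, TT.la_add, mul_add]
    exact add_mem hu hw
  · intro c u hu
    show (TT.la a (c • u).1, CP.rep.π a * (c • u).2) ∈ _
    rw [Prod.smul_fst, Prod.smul_snd, TT.la_smul, mul_smul_comm]
    exact Submodule.smul_mem _ c hu
  · have hset : {v : TT.X × CP.O | (TT.la a v.1, CP.rep.π a * v.2) ∈ Gam CP OXc pc TT td}
        = (fun v : TT.X × CP.O => (TT.lmul a v.1, CP.rep.π a * v.2)) ⁻¹'
          (Gam CP OXc pc TT td : Set (TT.X × CP.O)) := rfl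
    rw [hset]
    exact (isClosed_Gam CP OXc pc TT td).preimage
      (((TT.lmul a).continuous.comp continuous_fst).prodMk (continuous_const.mul continuous_snd))
  · rintro v ⟨x, S, rfl⟩
    show (TT.la a (td.mk2 x (pc.u S)), CP.rep.π a * (CP.rep.t x * S)) ∈ _
    rw [td.la_mk, ← mul_assoc, CP.rep.mul_t]
    exact GSet_sub CP OXc pc TT td _ ⟨E.la a x, S, rfl⟩

theorem Gam_sm (S : CP.O) : ∀ v ∈ Gam CP OXc pc TT td,
    (TT.sm v.1 S, v.2 * S) ∈ Gam CP OXc pc TT td := by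
  intro v hv
  refine clspan_le' (P := fun v : TT.X × CP.O =>
    (TT.sm v.1 S, v.2 * S) ∈ Gam CP OXc pc TT td)
    ?_ ?_ ?_ ?_ ?_ v ((mem_Gam CP OXc pc TT td).mp hv)
  · show (TT.sm (0 : TT.X × CP.O).1 S, (0 : TT.X × CP.O).2 * S) ∈ _
    rw [Prod.fst_zero, Prod.snd_zero, TT.sm_zero, zero_mul]
    exact zero_mem _
  · intro u w hu hw
    show (TT.sm (u + w).1 S, (u + w).2 * S) ∈ _
    rw [Prod.fst_add, Prod.snd_add, TT.sm_add, add_mul]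
    exact add_mem hu hw
  · intro c u hu
    show (TT.sm (c • u).1 S, (c • u).2 * S) ∈ _
    rw [Prod.smul_fst, Prod.smul_snd, TT.sm_smul, smul_mul_assoc]
    exact Submodule.smul_mem _ c hu
  · have hset : {v : TT.X × CP.O | (TT.sm v.1 S, v.2 * S) ∈ Gam CP OXc pc TT td}
        = (fun v : TT.X × CP.O => (TT.smCLM S v.1, v.2 * S)) ⁻¹'
          (Gam CP OXc pc TT td : Set (TT.X × CP.O)) := rfl
    rw [hset]
    exact (isClosed_Gam CP OXc pc TT td).preimage
      (((TT.smCLM S).continuous.comp continuous_fst).prodMk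
        ((continuous_mul_right S).comp continuous_snd))
  · rintro v ⟨x, S', rfl⟩
    show (TT.sm (td.mk2 x (pc.u S')) S, CP.rep.t x * S' * S) ∈ _
    rw [td.sm_mk, pc.sm, mul_assoc]
    exact GSet_sub CP OXc pc TT td _ ⟨x, S' * S, rfl⟩

end GamAux

end Statement4Aux


/-- For a correspondence `X` over `A` with universal covariant
representation `(Υ, t)`: `J_X · O_X ⊆ cl span { t(x)S }`, and if `X` is regular then
the map determined by `x ⊗ S ↦ t(x)S` is an isomorphism of `A–O_X` correspondences
from `X ⊗_A O_X` onto `O_X`. -/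
theorem katsura_acts_into_tX_OX_and_regular_case
    (A : Type u) [NonUnitalCStarAlgebra A] (E : Corr A A)
    (CP : CuntzPimsner E)
    -- O_X as an A–O_X correspondence via Υ and right multiplication
    (OXc : Corr A CP.O) (pc : PullCorr CP.rep.π OXc)
    -- the tensor product X ⊗_A O_X
    (TT : Corr A CP.O) (td : TensorData E OXc TT) :
    (∀ a ∈ E.katsuraIdeal, ∀ S : CP.O,
      CP.rep.π a * S ∈ clspan {z : CP.O | ∃ (x : E.X) (S' : CP.O), z = CP.rep.t x * S'}) ∧
    (E.Regular →
      ∃ Φ : TT.X → CP.O,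
        (∀ ζ η : TT.X, Φ (ζ + η) = Φ ζ + Φ η) ∧
        (∀ (c : ℂ) (ζ : TT.X), Φ (c • ζ) = c • Φ ζ) ∧
        (∀ ζ η : TT.X, star (Φ ζ) * Φ η = TT.ip ζ η) ∧
        (∀ (a : A) (ζ : TT.X), Φ (TT.la a ζ) = CP.rep.π a * Φ ζ) ∧
        (∀ (ζ : TT.X) (S : CP.O), Φ (TT.sm ζ S) = Φ ζ * S) ∧
        (∀ (x : E.X) (S : CP.O), Φ (td.mk2 x (pc.u S)) = CP.rep.t x * S) ∧
        Function.Bijective Φ) := by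
  constructor
  · intro a ha S
    exact (mem_Isub CP).mp (pi_mul_mem CP a ha S)
  · intro hreg
    choose Φ hΦ using Gam_total CP OXc pc TT td
    have uniq : ∀ v w : TT.X × CP.O, v ∈ Gam CP OXc pc TT td → w ∈ Gam CP OXc pc TT td →
        v.1 = w.1 → v.2 = w.2 := by
      intro v w hv hw h1
      have hd := Gam_norm CP OXc pc TT td _ (sub_mem hv hw)
      simp only [Prod.fst_sub, Prod.snd_sub] at hd
      rw [h1, sub_self, norm_zero] at hd
      exact sub_eq_zero.mp (norm_eq_zero.mp hd)
    have uniqPhi : ∀ (ζ : TT.X) (p : CP.O), (ζ, p) ∈ Gam CP OXc pc TT td → Φ ζ = p :=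
      fun ζ p h => uniq _ _ (hΦ ζ) h rfl
    refine ⟨Φ, ?_, ?_, ?_, ?_, ?_, ?_, ?_, ?_⟩
    · intro ζ η
      exact uniqPhi _ _ (add_mem (hΦ ζ) (hΦ η))
    · intro c ζ
      exact uniqPhi _ _ (Submodule.smul_mem _ c (hΦ ζ))
    · intro ζ η
      exact Gam_key CP OXc pc TT td _ (hΦ ζ) _ (hΦ η)
    · intro a ζ
      exact uniqPhi _ _ (Gam_la CP OXc pc TT td a _ (hΦ ζ))
    · intro ζ S
      exact uniqPhi _ _ (Gam_sm CP OXc pc TT td S _ (hΦ ζ))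
    · intro x S
      exact uniqPhi _ _ (GSet_sub CP OXc pc TT td _ ⟨x, S, rfl⟩)
    · intro ζ η h
      have hd := Gam_norm CP OXc pc TT td _ (sub_mem (hΦ ζ) (hΦ η))
      simp only [Prod.fst_sub, Prod.snd_sub] at hd
      rw [h, sub_self, norm_zero] at hd
      exact sub_eq_zero.mp (norm_eq_zero.mp hd.symm)
    · intro S
      have hS : S ∈ Isub CP := dense_Isub CP hreg S
      have hRng : ∀ q ∈ clspan (tSet CP), ∃ ζ, (ζ, q) ∈ Gam CP OXc pc TT td := by
        refine clspan_le' ?_ ?_ ?_ ?_ ?_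
        · exact ⟨0, zero_mem _⟩
        · rintro p q ⟨ζ, hζ⟩ ⟨η, hη⟩
          exact ⟨ζ + η, add_mem hζ hη⟩
        · rintro c p ⟨ζ, hζ⟩
          exact ⟨c • ζ, Submodule.smul_mem _ c hζ⟩
        · refine IsSeqClosed.isClosed ?_
          intro qs q hqs hq
          choose ζs hζs using hqs
          have hcq : CauchySeq qs := hq.cauchySeq
          have hcz : CauchySeq ζs := by
            rw [Metric.cauchySeq_iff] at hcq ⊢
            intro ε hε
            obtain ⟨N, hN⟩ := hcq ε hε
            refine ⟨N, fun m hm n hn => ?_⟩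
            have hd := Gam_norm CP OXc pc TT td _ (sub_mem (hζs m) (hζs n))
            rw [dist_eq_norm]
            calc ‖ζs m - ζs n‖ = ‖qs m - qs n‖ := by simpa using hd.symm
              _ < ε := by rw [← dist_eq_norm]; exact hN m hm n hn
          obtain ⟨ζ, hζ⟩ := cauchySeq_tendsto_of_complete hcz
          exact ⟨ζ, (isClosed_Gam CP OXc pc TT td).mem_of_tendsto (hζ.prodMk_nhds hq)
            (Filter.Eventually.of_forall hζs)⟩
        · rintro z ⟨x, S', rfl⟩
          exact ⟨td.mk2 x (pc.u S'), GSet_sub CP OXc pc TT td _ ⟨x, S', rfl⟩⟩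
      obtain ⟨ζ, hζ⟩ := hRng S ((mem_Isub CP).mp hS)
      exact ⟨ζ, uniqPhi ζ S hζ⟩

end
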